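/- Let $h \geq 2$ and let $g$ be the rotation of $\mathbb{R}^2$ by angle $2\pi/h$ about the origin. Let $\rho > 0$, $\theta_0 \in \mathbb{R}$, and let $0 < j < h$. Set $a_i = \rho e^{\mathrm{i}(\theta_0 + 2\pi i/h)}$ for $i \in \{0, 1, j, j+1\}$ (points on the circle of radius $\rho$). Let $\Gamma$ be a continuous path in $\{x \in \mathbb{R}^2 : |x| \geq \rho\}$ from $a_0$ to $a_j$. Then $\Gamma$ and its rotation $g(\Gamma)$ (a path from $a_1$ to $a_{j+1}$) must intersect: $\Gamma \cap g(\Gamma) \neq \emptyset$. -/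

import Mathlib

open Real

private lemma tele_prod (g : ℕ → ℂ) : ∀ n : ℕ, (∀ i, i ≤ n → g i ≠ 0) →
    (∏ i ∈ Finset.range n, g (i + 1) / g i) = g n / g 0 := by
  intro n
  induction n with
  | zero => intro hg; simp [div_self (hg 0 le_rfl)]
  | succ n ih =>
      intro hg
      rw [Finset.prod_range_succ, ih (fun i hi => hg i (hi.trans (Nat.le_succ n)))]
      have h0 := hg 0 (Nat.zero_le _)
      have hn := hg n (Nat.le_succ n)
      field_simp

/-- Continuous logarithm of a nonvanishing continuous function on a compact convex
set containing `0`. -/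
lemma exists_clog {E : Type*} [NormedAddCommGroup E] [NormedSpace ℝ E]
    {K : Set E} (hKconv : Convex ℝ K) (hKcomp : IsCompact K) (h0K : (0 : E) ∈ K)
    {F : E → ℂ} (hF : ContinuousOn F K) (hne : ∀ x ∈ K, F x ≠ 0) :
    ∃ L : E → ℂ, ContinuousOn L K ∧ ∀ x ∈ K, Complex.exp (L x) = F x := by
  obtain ⟨x₀, hx₀K, hx₀min⟩ := hKcomp.exists_isMinOn ⟨0, h0K⟩ hF.norm
  set m : ℝ := ‖F x₀‖ with hm_def
  have hm : 0 < m := norm_pos_iff.2 (hne x₀ hx₀K)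
  have hmin : ∀ x ∈ K, m ≤ ‖F x‖ := fun x hx => hx₀min hx
  have hUC := hKcomp.uniformContinuousOn_of_continuous hF
  rw [Metric.uniformContinuousOn_iff] at hUC
  obtain ⟨δ, hδ, hδ'⟩ := hUC m hm
  obtain ⟨xC, hxCK, hxCmax⟩ := hKcomp.exists_isMaxOn ⟨0, h0K⟩ continuous_norm.continuousOn
  set C : ℝ := ‖xC‖ with hC_def
  have hC : ∀ x ∈ K, ‖x‖ ≤ C := fun x hx => hxCmax hx
  set n : ℕ := ⌈C / δ⌉₊ + 1 with hn_def
  have hnpos : 0 < (n : ℝ) := by positivity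
  have hn : C / δ < n := (Nat.le_ceil _).trans_lt (by exact_mod_cast Nat.lt_succ_self _)
  have hC0 : 0 ≤ C := norm_nonneg _
  -- the subdivision points
  set pt : ℕ → E → E := fun i x => ((i : ℝ) / n) • x with hpt_def
  have hptK : ∀ x ∈ K, ∀ i, i ≤ n → pt i x ∈ K := by
    intro x hx i hi
    have h1 : (0:ℝ) ≤ (i : ℝ) / n := by positivity
    have h2 : (i : ℝ) / n ≤ 1 := by
      rw [div_le_one hnpos]; exact_mod_cast hi
    have := hKconv h0K hx (by linarith : (0:ℝ) ≤ 1 - (i : ℝ)/n) h1 (by ring)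
    simpa [pt, smul_zero] using this
  have hdist : ∀ x ∈ K, ∀ i : ℕ, dist (pt (i + 1) x) (pt i x) < δ := by
    intro x hx i
    have : pt (i+1) x - pt i x = ((1:ℝ)/n) • x := by
      rw [hpt_def]; dsimp only; rw [← sub_smul]; congr 1; push_cast; ring
    rw [dist_eq_norm, this, norm_smul]
    have hxn := hC x hx
    have h1 : ‖(1:ℝ)/n‖ = 1/(n:ℝ) := by
      rw [Real.norm_eq_abs, abs_of_pos (by positivity)]
    rw [h1]
    calc 1/(n:ℝ) * ‖x‖ ≤ 1/(n:ℝ) * C := by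
          apply mul_le_mul_of_nonneg_left hxn (by positivity)
      _ < δ := by
          rw [div_mul_eq_mul_div, one_mul, div_lt_iff₀ hnpos]
          rw [div_lt_iff₀ hδ] at hn
          linarith [hn]
  have hFclose : ∀ x ∈ K, ∀ i, i < n → ‖F (pt (i+1) x) - F (pt i x)‖ < m := by
    intro x hx i hi
    have := hδ' _ (hptK x hx (i+1) hi) _ (hptK x hx i hi.le) (hdist x hx i)
    rwa [dist_eq_norm] at this
  have hrat : ∀ x ∈ K, ∀ i, i < n →
      ‖F (pt (i+1) x) / F (pt i x) - 1‖ < 1 := by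
    intro x hx i hi
    have hden : F (pt i x) ≠ 0 := hne _ (hptK x hx i hi.le)
    have hdnorm : 0 < ‖F (pt i x)‖ := norm_pos_iff.2 hden
    rw [div_sub_one hden, norm_div, div_lt_one hdnorm]
    exact (hFclose x hx i hi).trans_le (hmin _ (hptK x hx i hi.le))
  have hslit : ∀ x ∈ K, ∀ i, i < n →
      F (pt (i+1) x) / F (pt i x) ∈ Complex.slitPlane := by
    intro x hx i hi
    have h1 := hrat x hx i hi
    rw [Complex.mem_slitPlane_iff]
    left
    have h2 : |(F (pt (i+1) x) / F (pt i x) - 1).re| ≤ ‖F (pt (i+1) x) / F (pt i x) - 1‖ :=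
      Complex.abs_re_le_norm _
    have h3 : (F (pt (i+1) x) / F (pt i x) - 1).re
        = (F (pt (i+1) x) / F (pt i x)).re - 1 := by simp
    rw [abs_le] at h2
    linarith [h2.1]
  refine ⟨fun x => Complex.log (F 0) +
      ∑ i ∈ Finset.range n, Complex.log (F (pt (i+1) x) / F (pt i x)), ?_, ?_⟩
  · apply ContinuousOn.add continuousOn_const
    apply continuousOn_finset_sum
    intro i hi
    rw [Finset.mem_range] at hi
    have hcomp : ∀ k : ℕ, k ≤ n → ContinuousOn (fun x => F (pt k x)) K := by
      intro k hk
      exact hF.comp (continuous_const_smul ((k:ℝ)/n)).continuousOn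
        (fun x hx => hptK x hx k hk)
    exact ContinuousOn.clog
      (((hcomp (i+1) hi).div (hcomp i hi.le)) (fun x hx => hne _ (hptK x hx i hi.le)))
      (fun x hx => hslit x hx i hi)
  · intro x hx
    rw [Complex.exp_add, Complex.exp_sum, Complex.exp_log (hne 0 h0K)]
    have hprod : ∀ i ∈ Finset.range n,
        Complex.exp (Complex.log (F (pt (i+1) x) / F (pt i x)))
          = F (pt (i+1) x) / F (pt i x) := by
      intro i hi
      rw [Finset.mem_range] at hi
      exact Complex.exp_log (div_ne_zero (hne _ (hptK x hx (i+1) hi))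
        (hne _ (hptK x hx i hi.le)))
    rw [Finset.prod_congr rfl hprod,
      tele_prod (fun i => F (pt i x)) n (fun i hi => hne _ (hptK x hx i hi))]
    have hpn : pt n x = x := by
      rw [hpt_def]; dsimp only
      rw [div_self (ne_of_gt hnpos), one_smul]
    have hp0 : pt 0 x = 0 := by
      rw [hpt_def]; dsimp only; simp
    rw [hpn, hp0]
    rw [mul_div_assoc', mul_comm, mul_div_assoc, div_self (hne 0 h0K), mul_one]


/-- sign of `sin` -/
noncomputable def sgn' (x : ℝ) : ℝ := if 0 < Real.sin x then 1 else -1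

private lemma corner_eq {x : ℝ} {k : ℤ} (hx : Real.cos x = 0)
    (h1 : 2*π*k - π/2 ≤ x) (h2 : x ≤ 2*π*k + π/2) :
    x = 2*π*k + sgn' x * (π/2) := by
  obtain ⟨nn, hn⟩ := Real.cos_eq_zero_iff.1 hx
  have hπ := Real.pi_pos
  -- (2n+1) ∈ {4k-1, 4k+1}
  have hb1 : (4*k - 1 : ℝ) ≤ 2*nn + 1 := by
    have hp2 : (0:ℝ) < π/2 := by linarith
    have h1' : (4*k-1 : ℝ) * (π/2) ≤ (2*nn+1) * (π/2) := by
      calc (4*(k:ℝ)-1) * (π/2) = 2*π*k - π/2 := by ring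
        _ ≤ x := h1
        _ = (2*nn+1) * (π/2) := by rw [hn]; ring
    exact le_of_mul_le_mul_right (by linarith [h1']) hp2
  have hb2 : (2*nn + 1 : ℝ) ≤ 4*k + 1 := by
    have hp2 : (0:ℝ) < π/2 := by linarith
    have h2' : (2*nn+1 : ℝ) * (π/2) ≤ (4*k+1) * (π/2) := by
      calc (2*(nn:ℝ)+1) * (π/2) = x := by rw [hn]; ring
        _ ≤ 2*π*k + π/2 := h2
        _ = (4*(k:ℝ)+1) * (π/2) := by ring
    exact le_of_mul_le_mul_right (by linarith [h2']) hp2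
  have hb1' : 4*k - 1 ≤ 2*nn + 1 := by exact_mod_cast hb1
  have hb2' : 2*nn + 1 ≤ 4*k + 1 := by exact_mod_cast hb2
  have hcase : 2*nn + 1 = 4*k - 1 ∨ 2*nn + 1 = 4*k + 1 := by omega
  rcases hcase with hc | hc
  · -- x = 2πk - π/2, sin x = -1
    have hxval : x = 2*π*k - π/2 := by
      rw [hn]
      have : ((2*nn+1 : ℤ) : ℝ) = (4*k - 1 : ℝ) := by exact_mod_cast hc
      push_cast at this ⊢
      nlinarith [this]
    have hsin : Real.sin x = -1 := by
      rw [hxval]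
      have : 2*π*(k:ℝ) - π/2 = -(π/2) + k * (2*π) := by ring
      rw [this, Real.sin_add_int_mul_two_pi]
      simp
    rw [sgn']
    rw [if_neg (by rw [hsin]; norm_num)]
    linarith [hxval]
  · have hxval : x = 2*π*k + π/2 := by
      rw [hn]
      have : ((2*nn+1 : ℤ) : ℝ) = (4*k + 1 : ℝ) := by exact_mod_cast hc
      push_cast at this ⊢
      nlinarith [this]
    have hsin : Real.sin x = 1 := by
      rw [hxval]
      have : 2*π*(k:ℝ) + π/2 = π/2 + k * (2*π) := by ring
      rw [this, Real.sin_add_int_mul_two_pi]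
      simp
    rw [sgn', if_pos (by rw [hsin]; norm_num)]
    linarith [hxval]

/-- Edge lemma: a continuous real function on `[0,1]` whose cosine is nonnegative and
vanishes at the endpoints satisfies `f 1 - f 0 = (sgn'(f 1) - sgn'(f 0)) * (π/2)`. -/
lemma lemB {f : ℝ → ℝ} (hf : ContinuousOn f (Set.Icc 0 1))
    (hcos : ∀ t ∈ Set.Icc (0:ℝ) 1, 0 ≤ Real.cos (f t))
    (h0 : Real.cos (f 0) = 0) (h1 : Real.cos (f 1) = 0) :
    f 1 - f 0 = (sgn' (f 1) - sgn' (f 0)) * (π/2) := by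
  have hπ := Real.pi_pos
  set k : ℤ := round (f 0 / (2*π)) with hk_def
  have hmem0 : (0:ℝ) ∈ Set.Icc (0:ℝ) 1 := by norm_num
  have hmem1 : (1:ℝ) ∈ Set.Icc (0:ℝ) 1 := by norm_num
  -- |f 0 - 2πk| ≤ π
  have hround : |f 0 / (2*π) - k| ≤ 1/2 := abs_sub_round _
  have hf0π : |f 0 - 2*π*k| ≤ π := by
    rw [abs_le] at hround ⊢
    have e : f 0 = (f 0 / (2*π)) * (2*π) := by field_simp
    constructor <;> nlinarith [hround.1, hround.2]
  -- f 0 ∈ [2πk - π/2, 2πk + π/2]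
  have hf0 : 2*π*k - π/2 ≤ f 0 ∧ f 0 ≤ 2*π*k + π/2 := by
    obtain ⟨nn, hn⟩ := Real.cos_eq_zero_iff.1 h0
    rw [abs_le] at hf0π
    have hb1 : (4*k - 2 : ℝ) ≤ 2*nn + 1 := by
      have hp2 : (0:ℝ) < π/2 := by linarith
      have : (4*k-2 : ℝ) * (π/2) ≤ (2*nn+1) * (π/2) := by nlinarith [hn, hf0π.1]
      exact le_of_mul_le_mul_right (by linarith [this]) hp2
    have hb2 : (2*nn + 1 : ℝ) ≤ 4*k + 2 := by
      have hp2 : (0:ℝ) < π/2 := by linarith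
      have : (2*nn+1 : ℝ) * (π/2) ≤ (4*k+2) * (π/2) := by nlinarith [hn, hf0π.2]
      exact le_of_mul_le_mul_right (by linarith [this]) hp2
    have hb1' : 4*k - 2 ≤ 2*nn + 1 := by exact_mod_cast hb1
    have hb2' : 2*nn + 1 ≤ 4*k + 2 := by exact_mod_cast hb2
    have hcase : 2*nn + 1 = 4*k - 1 ∨ 2*nn + 1 = 4*k + 1 := by omega
    rcases hcase with hc | hc <;>
    · have hc' : ((2*nn+1 : ℤ) : ℝ) = _ := congrArg (fun z : ℤ => (z:ℝ)) hc
      push_cast at hc'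
      constructor <;> nlinarith [hn, hc']
  -- key confinement
  have hconf : ∀ t ∈ Set.Icc (0:ℝ) 1, 2*π*k - π/2 ≤ f t ∧ f t ≤ 2*π*k + π/2 := by
    intro t ht
    by_contra hcon
    push_neg at hcon
    -- either f t > 2πk + π/2 or f t < 2πk - π/2
    have hIVT : ∀ v : ℝ, v ∈ Set.Icc (f 0) (f t) ∪ Set.Icc (f t) (f 0) →
        ∃ u ∈ Set.Icc (0:ℝ) 1, f u = v := by
      intro v hv
      have hsub : Set.Icc (0:ℝ) t ⊆ Set.Icc 0 1 := Set.Icc_subset_Icc le_rfl ht.2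
      rcases hv with hv | hv
      · obtain ⟨u, hu, hu'⟩ := intermediate_value_Icc ht.1 (hf.mono hsub) hv
        exact ⟨u, hsub hu, hu'⟩
      · obtain ⟨u, hu, hu'⟩ := intermediate_value_Icc' ht.1 (hf.mono hsub) hv
        exact ⟨u, hsub hu, hu'⟩
    rcases lt_or_ge (2*π*k + π/2) (f t) with hgt | hle
    · -- f t ≥ 2πk + 3π/2 (since cos (f t) ≥ 0)
      have hft : 2*π*k + 3*(π/2) ≤ f t := by
        by_contra hlt
        push_neg at hlt
        have : Real.cos (f t) < 0 := by
          have he : f t = (f t - 2*π*k) + k * (2*π) := by ring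
          rw [he, Real.cos_add_int_mul_two_pi]
          apply Real.cos_neg_of_pi_div_two_lt_of_lt <;> linarith
        linarith [hcos t ht]
      obtain ⟨u, hu, hu'⟩ := hIVT (2*π*k + π) (Or.inl ⟨by linarith [hf0.2], by linarith⟩)
      have : Real.cos (f u) = -1 := by
        rw [hu']
        have he : 2*π*(k:ℝ) + π = (k:ℤ) * (2*π) + π := by push_cast; ring
        rw [he, Real.cos_int_mul_two_pi_add_pi]
      linarith [hcos u hu]
    · have hlt : f t < 2*π*k - π/2 := by
        by_contra hcc
        push_neg at hcc
        linarith [hcon hcc]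
      have hft : f t ≤ 2*π*k - 3*(π/2) := by
        by_contra hlt2
        push_neg at hlt2
        have : Real.cos (f t) < 0 := by
          have he : f t = -(2*π*k - f t) + k * (2*π) := by ring
          rw [he, Real.cos_add_int_mul_two_pi, Real.cos_neg]
          apply Real.cos_neg_of_pi_div_two_lt_of_lt <;> linarith
        linarith [hcos t ht]
      obtain ⟨u, hu, hu'⟩ := hIVT (2*π*k - π) (Or.inr ⟨by linarith, by linarith [hf0.1]⟩)
      have : Real.cos (f u) = -1 := by
        rw [hu']
        have he : 2*π*(k:ℝ) - π = (k:ℤ) * (2*π) - π := by push_cast; ring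
        rw [he, Real.cos_int_mul_two_pi_sub_pi]
      linarith [hcos u hu]
  have e0 := corner_eq h0 (hconf 0 hmem0).1 (hconf 0 hmem0).2
  have e1 := corner_eq h1 (hconf 1 hmem1).1 (hconf 1 hmem1).2
  linear_combination e1 - e0

private lemma sgn'_add_pi {x : ℝ} (hx : Real.cos x = 0) : sgn' (x + π) = - sgn' x := by
  have hs : Real.sin x ≠ 0 := by
    intro h0
    have := Real.sin_sq_add_cos_sq x
    rw [h0, hx] at this; norm_num at this
  rw [sgn', sgn', Real.sin_add_pi]
  rcases lt_or_gt_of_ne hs with hneg | hpos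
  · rw [if_pos (by linarith : (0:ℝ) < -Real.sin x), if_neg (not_lt.2 hneg.le)]
    norm_num
  · rw [if_neg (by linarith : ¬ (0:ℝ) < -Real.sin x), if_pos hpos]

lemma lemB' {f : ℝ → ℝ} (hf : ContinuousOn f (Set.Icc 0 1))
    (hcos : ∀ t ∈ Set.Icc (0:ℝ) 1, Real.cos (f t) ≤ 0)
    (h0 : Real.cos (f 0) = 0) (h1 : Real.cos (f 1) = 0) :
    f 1 - f 0 = (sgn' (f 0) - sgn' (f 1)) * (π/2) := by
  have := lemB (f := fun t => f t + π) (hf.add continuousOn_const)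
    (fun t ht => by rw [Real.cos_add_pi]; linarith [hcos t ht])
    (by rw [Real.cos_add_pi, h0]; ring) (by rw [Real.cos_add_pi, h1]; ring)
  simp only [sgn'_add_pi h0, sgn'_add_pi h1] at this
  linarith [this]


set_option maxHeartbeats 2000000 in
/-- a path `Γ` in the exterior of the disk of radius `ρ` from
`a₀ = ρe^{iθ₀}` to `a_j = ρe^{i(θ₀+2πj/h)}` must intersect its rotation by
`2π/h` (which is a path from `a₁` to `a_{j+1}`). -/
theorem stmt11 (h : ℕ) (hh : 2 ≤ h) (j : ℕ) (hj0 : 0 < j) (hjh : j < h)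
    (ρ θ₀ : ℝ) (hρ : 0 < ρ)
    (γ : ℝ → ℂ) (hγ : ContinuousOn γ (Set.Icc 0 1))
    (hstart : γ 0 = (ρ : ℂ) * Complex.exp (Complex.I * θ₀))
    (hend : γ 1 = (ρ : ℂ) * Complex.exp (Complex.I * θ₀) *
      Complex.exp (2 * (π : ℂ) * Complex.I / h) ^ j)
    (hext : ∀ t ∈ Set.Icc (0 : ℝ) 1, ρ ≤ ‖γ t‖) :
    ∃ s ∈ Set.Icc (0 : ℝ) 1, ∃ t ∈ Set.Icc (0 : ℝ) 1,
      γ s = Complex.exp (2 * (π : ℂ) * Complex.I / h) * γ t := by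

  by_contra hcon
  push_neg at hcon
  have hπ := Real.pi_pos
  have hh0 : (0:ℝ) < h := by positivity
  set α : ℝ := 2 * π / h with hα_def
  have hα : 0 < α := by positivity
  have mem0 : (0:ℝ) ∈ Set.Icc (0:ℝ) 1 := by norm_num
  have mem1 : (1:ℝ) ∈ Set.Icc (0:ℝ) 1 := by norm_num
  have hrot : Complex.exp (2 * (π:ℂ) * Complex.I / h) = Complex.exp ((α:ℂ) * Complex.I) := by
    congr 1
    rw [hα_def]
    push_cast
    ring
  -- clamp
  set c : ℝ → ℝ := fun t => max 0 (min 1 t) with hc_def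
  have hc_cont : Continuous c := continuous_const.max (continuous_const.min continuous_id)
  have hc_mem : ∀ t, c t ∈ Set.Icc (0:ℝ) 1 :=
    fun t => ⟨le_max_left _ _, max_le (by norm_num) (min_le_left _ _)⟩
  have hc0 : c 0 = 0 := by norm_num [hc_def]
  have hc1 : c 1 = 1 := by norm_num [hc_def]
  set γ' : ℝ → ℂ := fun t => γ (c t) with hγ'_def
  have hγ'c : Continuous γ' := hγ.comp_continuous hc_cont hc_mem
  have habs : ∀ t : ℝ, ρ ≤ ‖γ' t‖ := fun t => hext (c t) (hc_mem t)
  have hne' : ∀ t ∈ Set.Icc (0:ℝ) 1, γ' t ≠ 0 := by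
    intro t _ h0
    have := habs t
    rw [h0] at this
    simp at this
    linarith
  have hγ'0 : γ' 0 = γ 0 := by rw [hγ'_def]; simp [hc0]
  have hγ'1 : γ' 1 = γ 1 := by rw [hγ'_def]; simp [hc1]
  -- first lift
  obtain ⟨u, hu_cont, hu⟩ := exists_clog (convex_Icc (0:ℝ) 1) isCompact_Icc
    (Set.left_mem_Icc.2 zero_le_one) hγ'c.continuousOn hne'
  have hure : ∀ t ∈ Set.Icc (0:ℝ) 1, Real.exp ((u t).re) = ‖γ' t‖ := by
    intro t ht
    rw [← Complex.norm_exp, hu t ht]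
  have hre : ∀ t ∈ Set.Icc (0:ℝ) 1, Real.log ρ ≤ (u t).re := by
    intro t ht
    rw [Real.log_le_iff_le_exp hρ, hure t ht]
    exact habs t
  have habs0 : ‖γ 0‖ = ρ := by
    rw [hstart, norm_mul, Complex.norm_real, Real.norm_of_nonneg hρ.le, Complex.norm_exp]
    simp
  have habs1 : ‖γ 1‖ = ρ := by
    rw [hend, hrot, norm_mul, norm_mul, norm_pow, Complex.norm_real, Real.norm_of_nonneg hρ.le,
      Complex.norm_exp, Complex.norm_exp_ofReal_mul_I, one_pow]
    simp
  have h0re : (u 0).re = Real.log ρ := by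
    have h1 := hure 0 mem0
    rw [hγ'0, habs0] at h1
    have := congrArg Real.log h1
    rwa [Real.log_exp] at this
  have h1re : (u 1).re = Real.log ρ := by
    have h1 := hure 1 mem1
    rw [hγ'1, habs1] at h1
    have := congrArg Real.log h1
    rwa [Real.log_exp] at this
  -- the winding integer
  have hexp10 : Complex.exp (u 1) = Complex.exp (u 0 + ((2*π*j/h : ℝ):ℂ) * Complex.I) := by
    have harg : ((2*π*j/h : ℝ):ℂ) * Complex.I = (j:ℕ) * ((α:ℂ) * Complex.I) := by
      rw [hα_def]; push_cast; ring
    rw [Complex.exp_add, harg, Complex.exp_nat_mul, hu 1 mem1, hu 0 mem0, hγ'1, hγ'0,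
      hend, hstart, hrot]
  obtain ⟨m, hm⟩ := Complex.exp_eq_exp_iff_exists_int.1 hexp10
  set N : ℤ := (j:ℤ) + (h:ℤ) * m with hN_def
  have him : (u 1).im - (u 0).im = α * N := by
    have := congrArg Complex.im hm
    simp only [Complex.add_im, Complex.mul_im, Complex.ofReal_re, Complex.ofReal_im,
      Complex.I_re, Complex.I_im, Complex.intCast_re, Complex.intCast_im] at this
    have hαN : α * (N:ℝ) = 2*π*(j:ℝ)/(h:ℝ) + (m:ℝ) * (2*π) := by
      rw [hα_def, hN_def]
      push_cast
      field_simp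
    rw [hαN]
    norm_num at this
    linarith [this]
  -- K₂ and second lift
  set K₂ : Set (ℝ × ℝ) := Set.Icc (0:ℝ) 1 ×ˢ Set.Icc (0:ℝ) 1 with hK₂_def
  have hK₂conv : Convex ℝ K₂ := (convex_Icc _ _).prod (convex_Icc _ _)
  have hK₂comp : IsCompact K₂ := isCompact_Icc.prod isCompact_Icc
  have h0K₂ : (0 : ℝ × ℝ) ∈ K₂ := ⟨mem0, mem0⟩
  set F : ℝ × ℝ → ℂ := fun p => u p.1 - u p.2 - (α:ℂ) * Complex.I with hF_def
  have hFcont : ContinuousOn F K₂ :=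
    ((hu_cont.comp continuous_fst.continuousOn fun p hp => hp.1).sub
      (hu_cont.comp continuous_snd.continuousOn fun p hp => hp.2)).sub continuousOn_const
  have hFavoid : ∀ p ∈ K₂, ∀ k : ℤ, F p ≠ (k:ℂ) * (2*(π:ℂ)*Complex.I) := by
    intro p hp k heq
    have hu1 : u p.1 = u p.2 + (α:ℂ)*Complex.I + (k:ℂ)*(2*(π:ℂ)*Complex.I) := by
      rw [hF_def] at heq
      dsimp only at heq
      linear_combination heq
    have : γ' p.1 = Complex.exp ((α:ℂ)*Complex.I) * γ' p.2 := by
      rw [← hu p.1 hp.1, ← hu p.2 hp.2, hu1, Complex.exp_add, Complex.exp_add,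
        Complex.exp_int_mul_two_pi_mul_I, mul_one]
      ring
    exact hcon (c p.1) (hc_mem _) (c p.2) (hc_mem _) (by rw [hrot]; exact this)
  have hFne : ∀ p ∈ K₂, F p ≠ 0 := by
    intro p hp
    have := hFavoid p hp 0
    simpa using this
  obtain ⟨L, hL_cont, hL⟩ := exists_clog hK₂conv hK₂comp h0K₂ hFcont hFne
  -- bridges
  have hRe : ∀ p ∈ K₂, (F p).re = Real.exp ((L p).re) * Real.cos ((L p).im) := by
    intro p hp
    rw [← hL p hp, Complex.exp_re]
  have hIm : ∀ p ∈ K₂, (F p).im = Real.exp ((L p).re) * Real.sin ((L p).im) := by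
    intro p hp
    rw [← hL p hp, Complex.exp_im]
  have hcos0 : ∀ p ∈ K₂, (F p).re = 0 → Real.cos ((L p).im) = 0 := by
    intro p hp h0
    have := hRe p hp
    rw [h0] at this
    have hepos := Real.exp_pos ((L p).re)
    exact (mul_eq_zero.1 this.symm).resolve_left (ne_of_gt hepos)
  have hcosnn : ∀ p ∈ K₂, 0 ≤ (F p).re → 0 ≤ Real.cos ((L p).im) := by
    intro p hp h0
    have h1 := hRe p hp
    have hepos := Real.exp_pos ((L p).re)
    nlinarith
  have hcosnp : ∀ p ∈ K₂, (F p).re ≤ 0 → Real.cos ((L p).im) ≤ 0 := by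
    intro p hp h0
    have h1 := hRe p hp
    have hepos := Real.exp_pos ((L p).re)
    nlinarith
  have hsin_neg : ∀ p ∈ K₂, (F p).im < 0 → Real.sin ((L p).im) < 0 := by
    intro p hp h0
    have h1 := hIm p hp
    have hepos := Real.exp_pos ((L p).re)
    nlinarith
  have hsin_pos : ∀ p ∈ K₂, 0 < (F p).im → 0 < Real.sin ((L p).im) := by
    intro p hp h0
    have h1 := hIm p hp
    have hepos := Real.exp_pos ((L p).re)
    nlinarith
  -- components of F
  have hFre : ∀ p : ℝ × ℝ, (F p).re = (u p.1).re - (u p.2).re := by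
    intro p
    simp [hF_def, Complex.sub_re, Complex.mul_re]
  have hFim : ∀ p : ℝ × ℝ, (F p).im = (u p.1).im - (u p.2).im - α := by
    intro p
    simp [hF_def, Complex.sub_im, Complex.mul_im]
  -- corner memberships
  have cm00 : ((0:ℝ), (0:ℝ)) ∈ K₂ := ⟨mem0, mem0⟩
  have cm10 : ((1:ℝ), (0:ℝ)) ∈ K₂ := ⟨mem1, mem0⟩
  have cm01 : ((0:ℝ), (1:ℝ)) ∈ K₂ := ⟨mem0, mem1⟩
  have cm11 : ((1:ℝ), (1:ℝ)) ∈ K₂ := ⟨mem1, mem1⟩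
  -- corner values
  have hre00 : (F (0,0)).re = 0 := by rw [hFre]; simp
  have hre10 : (F (1,0)).re = 0 := by rw [hFre]; simp [h0re, h1re]
  have hre01 : (F (0,1)).re = 0 := by rw [hFre]; simp [h0re, h1re]
  have hre11 : (F (1,1)).re = 0 := by rw [hFre]; simp
  have him00 : (F (0,0)).im = -α := by rw [hFim]; simp
  have him11 : (F (1,1)).im = -α := by rw [hFim]; simp
  have him10 : (F (1,0)).im = α * ((N:ℝ) - 1) := by
    rw [hFim]
    simp only
    rw [show (u 1).im - (u 0).im = α * N from him]
    ring
  have him01 : (F (0,1)).im = -(α * ((N:ℝ) + 1)) := by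
    rw [hFim]
    simp only
    have : (u 0).im - (u 1).im = -(α * N) := by linarith [him]
    rw [this]
    ring
  -- N is not -1, 0, 1
  have hN0 : N ≠ 0 := by
    intro h0
    rw [hN_def] at h0
    have hj1 : (0:ℤ) < (j:ℤ) := by exact_mod_cast hj0
    have hj2 : (j:ℤ) < (h:ℤ) := by exact_mod_cast hjh
    have hh2 : (2:ℤ) ≤ (h:ℤ) := by exact_mod_cast hh
    have hjm : (j:ℤ) = (h:ℤ) * (-m) := by linarith
    rcases le_or_gt (-m) 0 with hm' | hm'
    · nlinarith
    · have : (1:ℤ) ≤ -m := hm'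
      nlinarith
  have hN1 : N ≠ 1 := by
    intro h1
    apply hFne (1,0) cm10
    rw [Complex.ext_iff]
    constructor
    · rw [hre10]; rfl
    · rw [him10, h1]; norm_num
  have hNm1 : N ≠ -1 := by
    intro h1
    apply hFne (0,1) cm01
    rw [Complex.ext_iff]
    constructor
    · rw [hre01]; rfl
    · rw [him01, h1]; norm_num
  -- edge data
  have hedge_cont : ∀ g : ℝ → ℝ × ℝ, Continuous g →
      (∀ s ∈ Set.Icc (0:ℝ) 1, g s ∈ K₂) →
      ContinuousOn (fun s => (L (g s)).im) (Set.Icc 0 1) := by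
    intro g hg hmap
    exact Complex.continuous_im.comp_continuousOn (hL_cont.comp hg.continuousOn hmap)
  -- edge cosine signs
  have hedge_b : ∀ s ∈ Set.Icc (0:ℝ) 1, 0 ≤ Real.cos ((L (s, 0)).im) := by
    intro s hs
    apply hcosnn (s,0) ⟨hs, mem0⟩
    rw [hFre]
    simp only
    rw [h0re]
    linarith [hre s hs]
  have hedge_t : ∀ s ∈ Set.Icc (0:ℝ) 1, 0 ≤ Real.cos ((L (s, 1)).im) := by
    intro s hs
    apply hcosnn (s,1) ⟨hs, mem1⟩
    rw [hFre]
    simp only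
    rw [h1re]
    linarith [hre s hs]
  have hedge_l : ∀ t ∈ Set.Icc (0:ℝ) 1, Real.cos ((L (0, t)).im) ≤ 0 := by
    intro t ht
    apply hcosnp (0,t) ⟨mem0, ht⟩
    rw [hFre]
    simp only
    rw [h0re]
    linarith [hre t ht]
  have hedge_r : ∀ t ∈ Set.Icc (0:ℝ) 1, Real.cos ((L (1, t)).im) ≤ 0 := by
    intro t ht
    apply hcosnp (1,t) ⟨mem1, ht⟩
    rw [hFre]
    simp only
    rw [h1re]
    linarith [hre t ht]
  -- corner cosines vanish
  have hc00 : Real.cos ((L (0,0)).im) = 0 := hcos0 _ cm00 hre00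
  have hc10 : Real.cos ((L (1,0)).im) = 0 := hcos0 _ cm10 hre10
  have hc01 : Real.cos ((L (0,1)).im) = 0 := hcos0 _ cm01 hre01
  have hc11 : Real.cos ((L (1,1)).im) = 0 := hcos0 _ cm11 hre11
  -- corner sine signs common to both cases
  have hs00 : Real.sin ((L (0,0)).im) < 0 := hsin_neg _ cm00 (by rw [him00]; linarith)
  have hs11 : Real.sin ((L (1,1)).im) < 0 := hsin_neg _ cm11 (by rw [him11]; linarith)
  have hsgn00 : sgn' ((L (0,0)).im) = -1 := by rw [sgn', if_neg (not_lt.2 hs00.le)]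
  have hsgn11 : sgn' ((L (1,1)).im) = -1 := by rw [sgn', if_neg (not_lt.2 hs11.le)]
  -- the four edge equations
  have e1 := lemB (f := fun s => (L (s, 0)).im)
    (hedge_cont _ (continuous_id.prodMk continuous_const) (fun s hs => ⟨hs, mem0⟩))
    hedge_b hc00 hc10
  have e2 := lemB' (f := fun t => (L (1, t)).im)
    (hedge_cont _ (continuous_const.prodMk continuous_id) (fun t ht => ⟨mem1, ht⟩))
    hedge_r hc10 hc11
  have e3 := lemB' (f := fun t => (L (0, t)).im)
    (hedge_cont _ (continuous_const.prodMk continuous_id) (fun t ht => ⟨mem0, ht⟩))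
    hedge_l hc00 hc01
  have e4 := lemB (f := fun s => (L (s, 1)).im)
    (hedge_cont _ (continuous_id.prodMk continuous_const) (fun s hs => ⟨hs, mem1⟩))
    hedge_t hc01 hc11
  -- case analysis on N
  have hNcase : 2 ≤ N ∨ N ≤ -2 := by omega
  rcases hNcase with hN | hN
  · have hNr : (2:ℝ) ≤ (N:ℝ) := by exact_mod_cast hN
    have hs10 : 0 < Real.sin ((L (1,0)).im) :=
      hsin_pos _ cm10 (by rw [him10]; nlinarith)
    have hs01 : Real.sin ((L (0,1)).im) < 0 :=
      hsin_neg _ cm01 (by rw [him01]; nlinarith)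
    have hsgn10 : sgn' ((L (1,0)).im) = 1 := by rw [sgn', if_pos hs10]
    have hsgn01 : sgn' ((L (0,1)).im) = -1 := by rw [sgn', if_neg (not_lt.2 hs01.le)]
    rw [hsgn00, hsgn10] at e1
    rw [hsgn10, hsgn11] at e2
    rw [hsgn00, hsgn01] at e3
    rw [hsgn11, hsgn01] at e4
    linarith
  · have hNr : (N:ℝ) ≤ -2 := by exact_mod_cast hN
    have hs10 : Real.sin ((L (1,0)).im) < 0 :=
      hsin_neg _ cm10 (by rw [him10]; nlinarith)
    have hs01 : 0 < Real.sin ((L (0,1)).im) :=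
      hsin_pos _ cm01 (by rw [him01]; nlinarith)
    have hsgn10 : sgn' ((L (1,0)).im) = -1 := by rw [sgn', if_neg (not_lt.2 hs10.le)]
    have hsgn01 : sgn' ((L (0,1)).im) = 1 := by rw [sgn', if_pos hs01]
    rw [hsgn00, hsgn10] at e1
    rw [hsgn10, hsgn11] at e2
    rw [hsgn00, hsgn01] at e3
    rw [hsgn11, hsgn01] at e4
    linarith
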